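/- A reparametrized partial fraction identity: Let r ≥ 1 and let a, c, f, q, e₁, …, e_r, z₁, …, z_r be nonzero complex numbers with z₁, …, z_r pairwise distinct, set E := e₁⋯e_r, and assume cEf ≠ aq and a z_l q ≠ c for all l. Then ∑_{l=1}^r [(1 − f z_l) ∏_{i=1}^r (1 − e_i z_l/z_i)] / [(1 − cEf/(aq))(1 − a z_l q/c) ∏_{i≠l} (1 − z_l/z_i)] = 1 − [(1 − cf/(aq))/(1 − cEf/(aq))] · ∏_{i=1}^r (1 − c e_i/(a z_i q))/(1 − c/(a z_i q)). -/

import Mathlib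

open scoped BigOperators

open Polynomial

lemma lagrange_eval_zero {ι : Type*} [DecidableEq ι] (s : Finset ι) (v : ι → ℂ)
    (hvs : Set.InjOn v s) (P : Polynomial ℂ) (hdeg : P.degree ≤ s.card) :
    P.eval 0 = P.coeff s.card * ∏ j ∈ s, (0 - v j) +
      ∑ j ∈ s, P.eval (v j) * ∏ k ∈ s.erase j, ((0 - v k) / (v j - v k)) := by
  set n := s.card with hn
  set N := Lagrange.nodal s v with hN
  set L := P.coeff n with hL
  set Q := P - Polynomial.C L * N with hQ
  have hNmonic : N.Monic := Lagrange.nodal_monic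
  have hNnat : N.natDegree = n := by simp [hN, hn]
  have hQdeg : Q.degree < n := by
    rw [Polynomial.degree_lt_iff_coeff_zero]
    intro m hm
    have hm' : (n : WithBot ℕ) ≤ m := by exact_mod_cast hm
    rcases hm.lt_or_eq with hlt' | heq
    · have hlt : (n : WithBot ℕ) < m := by exact_mod_cast hlt'
      have h1 : P.coeff m = 0 :=
        Polynomial.coeff_eq_zero_of_degree_lt (lt_of_le_of_lt hdeg hlt)
      have h2 : N.coeff m = 0 := by
        apply Polynomial.coeff_eq_zero_of_degree_lt
        rw [Lagrange.degree_nodal]; exact_mod_cast hlt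
      simp [hQ, Polynomial.coeff_sub, h1, h2]
    · have hcN : N.coeff m = 1 := by
        rw [← heq, ← hNnat]; exact hNmonic.coeff_natDegree
      have hcP : P.coeff m = L := by rw [← heq, hL]
      simp [hQ, Polynomial.coeff_sub, hcN, hcP]
  have hQint : Q = Lagrange.interpolate s v (fun i => P.eval (v i)) := by
    rw [Lagrange.eq_interpolate hvs hQdeg]
    apply Lagrange.interpolate_eq_of_values_eq_on
    intro i hi
    simp [hQ, hN, Lagrange.eval_nodal_at_node hi]
  have hEv : Q.eval 0 = ∑ j ∈ s, P.eval (v j) * ∏ k ∈ s.erase j, ((0 - v k) / (v j - v k)) := by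
    rw [hQint, Lagrange.interpolate_apply, Polynomial.eval_finset_sum]
    refine Finset.sum_congr rfl fun j hj => ?_
    rw [Polynomial.eval_mul, Polynomial.eval_C]
    congr 1
    rw [Lagrange.basis, Polynomial.eval_prod]
    refine Finset.prod_congr rfl fun k hk => ?_
    simp [Lagrange.basisDivisor, div_eq_mul_inv, mul_comm]
  have hN0 : N.eval 0 = ∏ j ∈ s, (0 - v j) := Lagrange.eval_nodal
  have : Q.eval 0 = P.eval 0 - L * N.eval 0 := by simp [hQ]
  rw [this, hN0] at hEv
  linear_combination hEv


lemma prodErase_zero (r : ℕ) (h : Fin (r+1) → ℂ) :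
    ∏ k ∈ Finset.univ.erase (0 : Fin (r+1)), h k = ∏ i : Fin r, h i.succ := by
  rw [Fin.univ_succ, Finset.erase_cons, Finset.prod_map]
  rfl

lemma prodErase_succ (r : ℕ) (h : Fin (r+1) → ℂ) (l : Fin r) :
    ∏ k ∈ Finset.univ.erase l.succ, h k = h 0 * ∏ i ∈ Finset.univ.erase l, h i.succ := by
  have : (Finset.univ.erase l.succ : Finset (Fin (r+1)))
      = insert 0 ((Finset.univ.erase l).map (Fin.succEmb r)) := by
    ext k
    induction k using Fin.cases with
    | zero => simpa using (Fin.succ_ne_zero l).symm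
    | succ i => simp [Fin.succ_ne_zero, (Fin.succ_injective r).ne_iff, eq_comm]
  rw [this, Finset.prod_insert (by simp [Fin.succ_ne_zero, eq_comm]), Finset.prod_map]
  rfl

/-- A reparametrized partial fraction identity used in the proof of the
`A_{r−1}` ₈φ₇ summation. -/
theorem reparametrized_partial_fraction_identity
    (r : ℕ) (hr : 1 ≤ r)
    (a c f q : ℂ) (e z : Fin r → ℂ)
    (ha : a ≠ 0) (hc : c ≠ 0) (hf : f ≠ 0) (hq : q ≠ 0)
    (he : ∀ i, e i ≠ 0) (hz : ∀ i, z i ≠ 0) (hzinj : Function.Injective z)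
    (hEf : c * (∏ i, e i) * f ≠ a * q)
    (hlc : ∀ l, a * z l * q ≠ c) :
    (∑ l, ((1 - f * z l) * ∏ i, (1 - e i * z l / z i)) /
        ((1 - c * (∏ i, e i) * f / (a * q)) * (1 - a * z l * q / c) *
          ∏ i ∈ Finset.univ.erase l, (1 - z l / z i))) =
      1 - (1 - c * f / (a * q)) / (1 - c * (∏ i, e i) * f / (a * q)) *
        ∏ i, (1 - c * e i / (a * z i * q)) / (1 - c / (a * z i * q)) := by
  classical
  have haq : a * q ≠ 0 := mul_ne_zero ha hq
  set w : ℂ := c / (a * q) with hw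
  have hw0 : w ≠ 0 := div_ne_zero hc haq
  have hzw : ∀ l, z l ≠ w := by
    intro l hlw
    apply hlc l
    rw [hlw, hw]
    field_simp
  -- nodes
  set x : Fin (r+1) → ℂ := Fin.cons w z with hx
  have hx0 : x 0 = w := rfl
  have hxs : ∀ i : Fin r, x i.succ = z i := fun i => rfl
  have hxinj : Function.Injective x := by
    intro j k hjk
    induction j using Fin.cases with
    | zero => induction k using Fin.cases with
      | zero => rfl
      | succ i => exact absurd ((hx0 ▸ hxs i ▸ hjk).symm) (hzw i)
    | succ j' => induction k using Fin.cases with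
      | zero => exact absurd (hx0 ▸ hxs j' ▸ hjk) (hzw j')
      | succ i => rw [hxs, hxs] at hjk; rw [hzinj hjk]
  -- the polynomial
  set g : ℂ → Polynomial ℂ := fun t => Polynomial.C (-t) * Polynomial.X + Polynomial.C 1 with hg
  have hgdeg : ∀ t : ℂ, t ≠ 0 → (g t).degree = 1 := fun t ht =>
    Polynomial.degree_linear (neg_ne_zero.mpr ht)
  have hglead : ∀ t : ℂ, t ≠ 0 → (g t).leadingCoeff = -t := fun t ht =>
    Polynomial.leadingCoeff_linear (neg_ne_zero.mpr ht)
  have hgeval : ∀ t s : ℂ, (g t).eval s = 1 - t * s := by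
    intro t s; simp [hg]; ring
  have hez : ∀ i, e i / z i ≠ 0 := fun i => div_ne_zero (he i) (hz i)
  set P : Polynomial ℂ := g f * ∏ i, g (e i / z i) with hP
  have hPdeg : P.degree = (r + 1 : ℕ) := by
    rw [hP, Polynomial.degree_mul, Polynomial.degree_prod, hgdeg f hf]
    rw [Finset.sum_congr rfl fun i _ => hgdeg _ (hez i)]
    simp [add_comm]
  have hPne : P ≠ 0 := by
    intro h0
    rw [h0, Polynomial.degree_zero] at hPdeg
    exact WithBot.coe_ne_bot hPdeg.symm
  have hPnat : P.natDegree = r + 1 := Polynomial.natDegree_eq_of_degree_eq_some hPdeg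
  have hPlead : P.coeff (r + 1) = (-f) * ∏ i, (-(e i / z i)) := by
    rw [← hPnat, Polynomial.coeff_natDegree, hP, Polynomial.leadingCoeff_mul,
      Polynomial.leadingCoeff_prod, hglead f hf]
    congr 1
    exact Finset.prod_congr rfl fun i _ => hglead _ (hez i)
  have hPeval : ∀ s : ℂ, P.eval s = (1 - f * s) * ∏ i, (1 - (e i / z i) * s) := by
    intro s
    rw [hP, Polynomial.eval_mul, Polynomial.eval_prod, hgeval]
    congr 1
    exact Finset.prod_congr rfl fun i _ => hgeval _ _
  -- apply the key lemma
  have hcard : (Finset.univ : Finset (Fin (r+1))).card = r + 1 := by simp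
  have key := lagrange_eval_zero Finset.univ x (hxinj.injOn) P (by rw [hPdeg, hcard])
  rw [hcard, hPeval 0] at key
  have h1 : (1 - f * 0) * ∏ i, (1 - (e i / z i) * 0) = 1 := by simp
  rw [h1] at key
  -- nonzeroness facts
  have hD : (1 : ℂ) - c * (∏ i, e i) * f / (a * q) ≠ 0 := by
    intro h0
    apply hEf
    have h2 : c * (∏ i, e i) * f / (a * q) = 1 := by linear_combination -h0
    exact (div_eq_one_iff_eq haq).mp h2
  have hb : ∀ l, (1 : ℂ) - a * z l * q / c ≠ 0 := by
    intro l h0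
    apply hlc l
    have h2 : a * z l * q / c = 1 := by linear_combination -h0
    exact (div_eq_one_iff_eq hc).mp h2
  have hzz : ∀ l i : Fin r, i ≠ l → (1 : ℂ) - z l / z i ≠ 0 := by
    intro l i hil h0
    have h2 : z l / z i = 1 := by linear_combination -h0
    exact hil (hzinj ((div_eq_one_iff_eq (hz i)).mp h2)).symm
  have hp : ∀ l, (∏ i ∈ Finset.univ.erase l, (1 - z l / z i)) ≠ 0 := by
    intro l
    rw [Finset.prod_ne_zero_iff]
    intro i hi
    exact hzz l i (Finset.mem_erase.mp hi).1
  -- the constant term T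
  have hT : P.coeff (r + 1) * ∏ j, (0 - x j) = c * (∏ i, e i) * f / (a * q) := by
    rw [hPlead, Fin.prod_univ_succ, hx0]
    rw [Finset.prod_congr rfl fun i (_ : i ∈ Finset.univ) => (hxs i ▸ rfl :
      (0 : ℂ) - x i.succ = 0 - z i)]
    have hprod : (∏ i, (-(e i / z i))) * (∏ i, ((0:ℂ) - z i)) = ∏ i, e i := by
      rw [← Finset.prod_mul_distrib]
      refine Finset.prod_congr rfl fun i _ => ?_
      field_simp
      linear_combination e i * mul_inv_cancel₀ (hz i)
    rw [hw]
    linear_combination f * (c / (a * q)) * hprod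
  -- the j = 0 term
  have hG0 : P.eval (x 0) * ∏ k ∈ Finset.univ.erase (0 : Fin (r+1)), ((0 - x k) / (x 0 - x k)) =
      (1 - c * f / (a * q)) * ∏ i, (1 - c * e i / (a * z i * q)) / (1 - c / (a * z i * q)) := by
    rw [hx0, hPeval w, prodErase_zero r (fun k => (0 - x k) / (w - x k))]
    have hfac : ∀ i : Fin r, (0 - x i.succ) / (w - x i.succ) =
        (0 - z i) / (w - z i) := fun i => by rw [hxs]
    rw [Finset.prod_congr rfl fun i _ => hfac i]
    have hfw : (1 : ℂ) - f * w = 1 - c * f / (a * q) := by rw [hw]; ring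
    rw [mul_assoc, ← Finset.prod_mul_distrib, hfw]
    congr 1
    refine Finset.prod_congr rfl fun i _ => ?_
    have h1 : w - z i ≠ 0 := sub_ne_zero.mpr fun hh => (hzw i) hh.symm
    have h1' : c - a * z i * q ≠ 0 := sub_ne_zero.mpr (hlc i).symm
    have hB : (0 - z i) / (w - z i) = ((1 : ℂ) - c / (a * z i * q))⁻¹ := by
      apply eq_inv_of_mul_eq_one_left
      have hzaq : a * z i * q ≠ 0 := mul_ne_zero (mul_ne_zero ha (hz i)) hq
      rw [hw, div_sub' (a := c) (b := z i) (c := a * q) haq, one_sub_div hzaq,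
        div_div_eq_mul_div, div_mul_div_comm,
        div_eq_one_iff_eq (mul_ne_zero (fun hh => h1' (by linear_combination hh)) hzaq)]
      ring
    have hA : (1 : ℂ) - e i / z i * w = 1 - c * e i / (a * z i * q) := by
      rw [hw]; ring
    rw [hB, hA]
    exact (div_eq_mul_inv _ _).symm
  -- the j = l.succ terms
  have hGl : ∀ l : Fin r,
      ((1 - f * z l) * ∏ i, (1 - e i * z l / z i)) /
        ((1 - c * (∏ i, e i) * f / (a * q)) * (1 - a * z l * q / c) *
          ∏ i ∈ Finset.univ.erase l, (1 - z l / z i)) =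
      (P.eval (x l.succ) *
        ∏ k ∈ Finset.univ.erase l.succ, ((0 - x k) / (x l.succ - x k))) /
        (1 - c * (∏ i, e i) * f / (a * q)) := by
    intro l
    rw [hxs, hPeval (z l),
      prodErase_succ r (fun k => (0 - x k) / (z l - x k)) l, hx0]
    have hfac : ∀ i : Fin r, i ∈ Finset.univ.erase l →
        (0 - x i.succ) / (z l - x i.succ) = (1 - z l / z i)⁻¹ := by
      intro i hi
      rw [hxs]
      have hil : i ≠ l := (Finset.mem_erase.mp hi).1
      have h1 : z l - z i ≠ 0 := sub_ne_zero.mpr fun hh => hil (hzinj hh).symm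
      apply eq_inv_of_mul_eq_one_left
      field_simp
      linear_combination z l * mul_inv_cancel₀ (hz i)
    rw [Finset.prod_congr rfl hfac, Finset.prod_inv_distrib]
    have hBw : (0 - w) / (z l - w) = ((1 : ℂ) - a * z l * q / c)⁻¹ := by
      apply eq_inv_of_mul_eq_one_left
      have h1' : z l * (a * q) - c ≠ 0 := fun hh => hlc l (by linear_combination hh)
      rw [hw, sub_div' (a := c) (b := z l) (c := a * q) haq, one_sub_div hc,
        div_div_eq_mul_div, div_mul_div_comm,
        div_eq_one_iff_eq (mul_ne_zero h1' hc)]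
      field_simp
      ring
    rw [hBw]
    have hprod2 : (∏ i, ((1:ℂ) - e i / z i * z l)) = ∏ i, (1 - e i * z l / z i) :=
      Finset.prod_congr rfl fun i _ => by ring
    rw [hprod2]
    have hbl := hb l
    have hpl := hp l
    set A := (1 - f * z l) * ∏ i, (1 - e i * z l / z i) with hAdef
    set bb := 1 - a * z l * q / c with hbbdef
    set pp := ∏ i ∈ Finset.univ.erase l, (1 - z l / z i) with hppdef
    set DD := 1 - c * (∏ i, e i) * f / (a * q) with hDDdef
    clear_value A bb pp DD
    rw [div_eq_div_iff (mul_ne_zero (mul_ne_zero hD hbl) hpl) hD]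
    have e1 : bb⁻¹ * bb = 1 := inv_mul_cancel₀ hbl
    have e2 : pp⁻¹ * pp = 1 := inv_mul_cancel₀ hpl
    linear_combination (-(A * DD * (pp⁻¹ * pp))) * e1 + (-(A * DD)) * e2
  -- assemble
  rw [Fin.sum_univ_succ] at key
  rw [hT, hG0] at key
  rw [Finset.sum_congr rfl fun l (_ : l ∈ Finset.univ) => hGl l, ← Finset.sum_div]
  have hsum : (∑ l : Fin r, P.eval (x l.succ) *
      ∏ k ∈ Finset.univ.erase l.succ, ((0 - x k) / (x l.succ - x k))) =
      1 - c * (∏ i, e i) * f / (a * q) -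
        (1 - c * f / (a * q)) * ∏ i, (1 - c * e i / (a * z i * q)) / (1 - c / (a * z i * q)) := by
    linear_combination -key
  rw [hsum]
  set D' := 1 - c * (∏ i, e i) * f / (a * q) with hD'
  set B1 := 1 - c * f / (a * q) with hB1
  set R := ∏ i, (1 - c * e i / (a * z i * q)) / (1 - c / (a * z i * q)) with hRdef
  clear_value D' B1 R
  rw [sub_div, div_self hD, div_mul_eq_mul_div]
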